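/- Let (G,P,θ) be an algebraic dynamical system, and let p,q,r,p',q' ∈ P satisfy pP ∩ qP = rP and p·p' = q·q' = r. If k,ℓ,k₁,ℓ₁ ∈ G satisfy θ_p(k)·θ_q(ℓ)⁻¹ = θ_p(k₁)·θ_q(ℓ₁)⁻¹, then there exists k₂ ∈ G such that k⁻¹·k₁ = θ_{p'}(k₂) and ℓ⁻¹·ℓ₁ = θ_{q'}(k₂). -/

import Mathlib

open Pointwise

/-- The principal right ideal `pS` of a monoid `S`. -/
def rIdeal {S : Type*} [Monoid S] (p : S) : Set S :=
  Set.range fun s => p * s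

/-- An algebraic dynamical system: a group `G`, a right LCM monoid `P`, and an action `θ` of
`P` by injective group endomorphisms of `G` which respects the order on `P`. -/
structure AlgDynSys (G P : Type*) [Group G] [Monoid P] where
  θ : P → G → G
  θ_hom : ∀ p a b, θ p (a * b) = θ p a * θ p b
  θ_one : ∀ a, θ 1 a = a
  θ_mul : ∀ p q a, θ (p * q) a = θ p (θ q a)
  θ_inj : ∀ p, Function.Injective (θ p)
  left_cancel : ∀ a b c : P, a * b = a * c → b = c
  lcm : ∀ p q : P, rIdeal p ∩ rIdeal q = ∅ ∨ ∃ r, rIdeal p ∩ rIdeal q = rIdeal r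
  respects : ∀ p q r : P, rIdeal p ∩ rIdeal q = rIdeal r →
    Set.range (θ p) ∩ Set.range (θ q) = Set.range (θ r)

namespace AlgDynSys

variable {G P : Type*} [Group G] [Monoid P]

/-- The multiplication of the semidirect product `G ⋊_θ P` on `G × P`. -/
def sdMul (A : AlgDynSys G P) (x y : G × P) : G × P :=
  (x.1 * A.θ x.2 y.1, x.2 * y.2)

/-- The principal right ideal `x · (G ⋊_θ P)` of the semidirect product. -/
def sdIdeal (A : AlgDynSys G P) (x : G × P) : Set (G × P) :=
  Set.range (A.sdMul x)

end AlgDynSys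

lemma theta_map_one {G P : Type*} [Group G] [Monoid P] (A : AlgDynSys G P) (p : P) :
    A.θ p 1 = 1 := by
  have := A.θ_hom p 1 1
  rw [one_mul] at this
  exact right_eq_mul.mp this

lemma theta_inv {G P : Type*} [Group G] [Monoid P] (A : AlgDynSys G P) (p : P) (a : G) :
    A.θ p a⁻¹ = (A.θ p a)⁻¹ := by
  have := A.θ_hom p a⁻¹ a
  rw [inv_mul_cancel, theta_map_one] at this
  exact eq_inv_of_mul_eq_one_left this.symm

/-- well-definedness of relation (A2): if `pP ∩ qP = rP`, `pp' = qq' = r`,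
and `θ_p(k)·θ_q(ℓ)⁻¹ = θ_p(k₁)·θ_q(ℓ₁)⁻¹`, then there is `k₂ ∈ G` with
`k⁻¹k₁ = θ_{p'}(k₂)` and `ℓ⁻¹ℓ₁ = θ_{q'}(k₂)`. -/
theorem A2_well_defined {G P : Type*} [Group G] [Monoid P] (A : AlgDynSys G P)
    (p q r p' q' : P) (hpq : rIdeal p ∩ rIdeal q = rIdeal r)
    (hp' : p * p' = r) (hq' : q * q' = r)
    (k l k₁ l₁ : G)
    (h : A.θ p k * (A.θ q l)⁻¹ = A.θ p k₁ * (A.θ q l₁)⁻¹) :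
    ∃ k₂ : G, k⁻¹ * k₁ = A.θ p' k₂ ∧ l⁻¹ * l₁ = A.θ q' k₂ := by
  have key : A.θ p (k⁻¹ * k₁) = A.θ q (l⁻¹ * l₁) := by
    rw [A.θ_hom, A.θ_hom, theta_inv, theta_inv]
    have hb : A.θ p k₁ = A.θ p k * (A.θ q l)⁻¹ * A.θ q l₁ := by rw [h]; group
    rw [hb]; group
  have hmem : A.θ p (k⁻¹ * k₁) ∈ Set.range (A.θ r) := by
    rw [← A.respects p q r hpq]
    exact ⟨⟨_, rfl⟩, ⟨_, key.symm⟩⟩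
  obtain ⟨k₂, hk₂⟩ := hmem
  refine ⟨k₂, ?_, ?_⟩
  · apply A.θ_inj p
    rw [← hk₂, ← A.θ_mul, hp']
  · apply A.θ_inj q
    rw [← key, ← hk₂, ← A.θ_mul, hq']
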